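/- Let ρ, σ, τ be non-degenerate density matrices, let s ↦ σ_s be the exponential arc connecting σ to ρ and t ↦ τ_t the exponential arc connecting τ to ρ. Then the mixed second derivative −(∂/∂s)(∂/∂t) D(σ_s||τ_t) evaluated at s = t = 0 exists and equals ∫₀¹ Tr( ρ^u c_ρ(σ) ρ^{1−u} c_ρ(τ) ) du, which also equals Tr( [c_ρ(σ)]^K_ρ · c_ρ(τ) ). -/

import Mathlib

open MeasureTheory
open scoped ComplexOrder

attribute [local instance] Matrix.frobeniusNormedAddCommGroup Matrix.frobeniusNormedSpace

variable {n : ℕ}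

/-- The matrix exponential. -/
noncomputable def mexp (A : Matrix (Fin n) (Fin n) ℂ) : Matrix (Fin n) (Fin n) ℂ :=
  NormedSpace.exp A

/-- The matrix logarithm, defined by (real) functional calculus; meaningful on
positive definite matrices. -/
noncomputable def mlog (A : Matrix (Fin n) (Fin n) ℂ) : Matrix (Fin n) (Fin n) ℂ :=
  cfc Real.log A

/-- Real powers of a matrix, defined by (real) functional calculus; meaningful on
positive definite matrices. -/
noncomputable def mpow (A : Matrix (Fin n) (Fin n) ℂ) (u : ℝ) : Matrix (Fin n) (Fin n) ℂ :=
  cfc (fun x : ℝ => x ^ u) A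

/-- Umegaki's relative entropy `D(ρ‖σ) = Tr ρ (log ρ - log σ)` (a real number). -/
noncomputable def relEnt (ρ σ : Matrix (Fin n) (Fin n) ℂ) : ℝ :=
  (Matrix.trace (ρ * (mlog ρ - mlog σ))).re

/-- The Kubo transform `[A]^K_ρ = ∫₀¹ ρ^u A ρ^(1-u) du` (entrywise Bochner integral). -/
noncomputable def kubo (ρ A : Matrix (Fin n) (Fin n) ℂ) : Matrix (Fin n) (Fin n) ℂ :=
  ∫ u in (0:ℝ)..1, mpow ρ u * A * mpow ρ (1 - u)

/-- The chart centered at `ρ`: `c_ρ(σ) = log σ - log ρ + D(ρ‖σ)·I`. -/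
noncomputable def chart (ρ σ : Matrix (Fin n) (Fin n) ℂ) : Matrix (Fin n) (Fin n) ℂ :=
  mlog σ - mlog ρ + relEnt ρ σ • (1 : Matrix (Fin n) (Fin n) ℂ)

/-- The normalization `α(t) = log Tr exp((1-t)·log ρ + t·log σ)` of the exponential arc. -/
noncomputable def alpha (ρ σ : Matrix (Fin n) (Fin n) ℂ) (t : ℝ) : ℝ :=
  Real.log (Matrix.trace (mexp ((1 - t) • mlog ρ + t • mlog σ))).re

/-- The exponential arc connecting `σ` to `ρ`:
`σ_t = exp((1-t)·log ρ + t·log σ - α(t)·I)`. -/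
noncomputable def arc (ρ σ : Matrix (Fin n) (Fin n) ℂ) (t : ℝ) : Matrix (Fin n) (Fin n) ℂ :=
  mexp ((1 - t) • mlog ρ + t • mlog σ - alpha ρ σ t • (1 : Matrix (Fin n) (Fin n) ℂ))

/-- The potential `Φ_ρ(A) = log Tr exp(log ρ + A)`. -/
noncomputable def potential (ρ A : Matrix (Fin n) (Fin n) ℂ) : ℝ :=
  Real.log (Matrix.trace (mexp (mlog ρ + A))).re

/-- The density matrix `τ_A = exp(log ρ + A) / Tr exp(log ρ + A)`. -/
noncomputable def tauOf (ρ A : Matrix (Fin n) (Fin n) ℂ) : Matrix (Fin n) (Fin n) ℂ :=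
  (Matrix.trace (mexp (mlog ρ + A)))⁻¹ • mexp (mlog ρ + A)

section Aux

open NormedSpace

attribute [local instance] Matrix.frobeniusNormedRing Matrix.frobeniusNormedAlgebra

local notation "Mat" => Matrix (Fin n) (Fin n) ℂ

lemma trace_cfc' (A : Mat) (hA : A.IsHermitian) (f : ℝ → ℝ) :
    (cfc f A).trace = ((∑ i, f (hA.eigenvalues i) : ℝ) : ℂ) := by
  rw [hA.cfc_eq, Matrix.IsHermitian.cfc, Unitary.conjStarAlgAut_apply, Matrix.trace_mul_cycle,
    Unitary.coe_star_mul_self, Matrix.one_mul, Matrix.trace_diagonal]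
  push_cast
  rfl

lemma spectrum_pos {ρ : Mat} (hρ : ρ.PosDef) : ∀ x ∈ spectrum ℝ ρ, 0 < x := by
  intro x hx
  rw [Matrix.IsHermitian.spectrum_real_eq_range_eigenvalues hρ.1] at hx
  obtain ⟨i, rfl⟩ := hx
  exact hρ.eigenvalues_pos i

lemma isSelfAdjoint_mlog (A : Mat) : IsSelfAdjoint (mlog A) := cfc_predicate _ _

lemma mexp_eq (A : Mat) : mexp A = exp A := by
  rw [mexp]

lemma exp_eq_cfc (H : Mat) (hH : IsSelfAdjoint H) : exp H = cfc Real.exp H :=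
  (@CFC.real_exp_eq_normedSpace_exp _ _ _ _
    Matrix.IsHermitian.instContinuousFunctionalCalculus _ hH).symm

lemma trace_exp_real (H : Mat) (hH : IsSelfAdjoint H) :
    (Matrix.trace (exp H)) = (((Matrix.trace (exp H)).re : ℝ) : ℂ) := by
  rw [exp_eq_cfc H hH, trace_cfc' H hH]
  simp

lemma trace_exp_re_pos (hn : 0 < n) (H : Mat) (hH : IsSelfAdjoint H) :
    0 < (Matrix.trace (exp H)).re := by
  rw [exp_eq_cfc H hH, trace_cfc' H hH]
  simp only [Complex.ofReal_re]
  have : Nonempty (Fin n) := ⟨⟨0, hn⟩⟩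
  exact Finset.sum_pos (fun i _ => Real.exp_pos _) Finset.univ_nonempty

lemma mlog_exp (H : Mat) (hH : IsSelfAdjoint H) : mlog (exp H) = H :=
  @CFC.log_exp _ _ _ _ Matrix.IsHermitian.instContinuousFunctionalCalculus H hH

open scoped MatrixOrder in
lemma exp_mlog {ρ : Mat} (hρ : ρ.PosDef) : exp (mlog ρ) = ρ :=
  @CFC.exp_log _ _ _ _ Matrix.IsHermitian.instContinuousFunctionalCalculus _ _ _ ρ
    (Matrix.PosDef.isStrictlyPositive hρ)

lemma exp_smul_one (r : ℝ) : exp (r • (1 : Mat)) = Real.exp r • (1 : Mat) := by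
  erw [← Algebra.algebraMap_eq_smul_one, ← map_exp (algebraMap ℝ (Matrix (Fin n) (Fin n) ℂ))
    (continuous_algebraMap ℝ _), Real.exp_eq_exp_ℝ, Algebra.algebraMap_eq_smul_one,
    ← Real.exp_eq_exp_ℝ]

lemma exp_sub_smul_one (H : Mat) (r : ℝ) :
    exp (H - r • (1 : Mat)) = Real.exp (-r) • exp H := by
  rw [sub_eq_add_neg, ← neg_smul,
    Matrix.exp_add_of_commute _ _ (((Commute.one_right H).smul_right (-r))), exp_smul_one,
    mul_smul_comm, mul_one]

lemma mpow_eq_exp {ρ : Mat} (hρ : ρ.PosDef) (u : ℝ) :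
    mpow ρ u = exp (u • mlog ρ) := by
  have hsa : IsSelfAdjoint ρ := hρ.1
  have hne : ∀ x ∈ spectrum ℝ ρ, x ≠ 0 := fun x hx => (spectrum_pos hρ x hx).ne'
  have h1 : u • mlog ρ = cfc (fun x : ℝ => u * Real.log x) ρ := by
    rw [mlog, ← cfc_smul u Real.log ρ]
    rfl
  rw [mpow, h1, exp_eq_cfc _ (cfc_predicate _ ρ),
    ← cfc_comp' Real.exp (fun x : ℝ => u * Real.log x) ρ (by fun_prop)
      (by fun_prop (disch := assumption))]
  exact cfc_congr fun x hx => by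
    rw [Real.rpow_def_of_pos (spectrum_pos hρ x hx), mul_comm]

lemma mpow_mul_mpow {ρ : Mat} (hρ : ρ.PosDef) (u : ℝ) :
    mpow ρ u * mpow ρ (1 - u) = ρ := by
  have hc : ∀ v : ℝ, ContinuousOn (fun x : ℝ => x ^ v) (spectrum ℝ ρ) := fun v x hx =>
    (Real.continuousAt_rpow_const x v (Or.inl (spectrum_pos hρ x hx).ne')).continuousWithinAt
  rw [mpow, mpow, ← cfc_mul _ _ ρ (hc u) (hc (1 - u))]
  conv_rhs => rw [← cfc_id ℝ ρ hρ.1]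
  exact cfc_congr fun x hx => by
    rw [← Real.rpow_add (spectrum_pos hρ x hx)]
    simp

lemma cont_exp_smul (X : Mat) : Continuous fun u : ℝ => exp (u • X) :=
  exp_continuous.comp (continuous_id.smul continuous_const)

lemma cont_exp_one_sub_smul (X : Mat) : Continuous fun u : ℝ => exp ((1 - u) • X) :=
  exp_continuous.comp ((continuous_const.sub continuous_id).smul continuous_const)

lemma duhamel (A X : Mat) :
    exp X - exp A
      = ∫ u in (0:ℝ)..1, exp (u • X) * (X - A) * exp ((1 - u) • A) := by
  have key : ∀ u : ℝ, HasDerivAt (fun v : ℝ => exp (v • X) * exp ((1 - v) • A))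
      (exp (u • X) * (X - A) * exp ((1 - u) • A)) u := by
    intro u
    have h1 : HasDerivAt (fun v : ℝ => exp (v • X)) (exp (u • X) * X) u :=
      hasDerivAt_exp_smul_const X u
    have h2 : HasDerivAt (fun v : ℝ => exp ((1 - v) • A))
        ((-1 : ℝ) • (A * exp ((1 - u) • A))) u := by
      have hout := hasDerivAt_exp_smul_const' A (1 - u)
      have hin : HasDerivAt (fun v : ℝ => 1 - v) (-1) u := (hasDerivAt_id u).const_sub 1
      exact hout.scomp u hin
    have := h1.mul h2
    refine this.congr_deriv (Eq.symm ?_)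
    simp only [neg_one_smul, mul_neg]
    rw [mul_sub, sub_mul, mul_assoc]
    abel_nf
    rw [mul_assoc]
  have hcont : Continuous fun u : ℝ => exp (u • X) * (X - A) * exp ((1 - u) • A) :=
    ((cont_exp_smul X).mul continuous_const).mul (cont_exp_one_sub_smul A)
  have := intervalIntegral.integral_eq_sub_of_hasDerivAt
    (f := fun v : ℝ => exp (v • X) * exp ((1 - v) • A))
    (fun u _ => key u) (hcont.intervalIntegrable 0 1)
  rw [this]
  simp [exp_zero]

lemma duhamel_hasDerivAt (A B : Mat) :
    HasDerivAt (fun s : ℝ => exp (A + s • B))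
      (∫ u in (0:ℝ)..1, exp (u • A) * B * exp ((1 - u) • A)) 0 := by
  set J : ℝ → Mat := fun s => ∫ u in (0:ℝ)..1,
    exp (u • (A + s • B)) * B * exp ((1 - u) • A) with hJ
  have hJcont : Continuous J := by
    apply intervalIntegral.continuous_parametric_intervalIntegral_of_continuous'
    have : Continuous fun p : ℝ × ℝ => exp (p.2 • (A + p.1 • B)) * B * exp ((1 - p.2) • A) :=
      ((exp_continuous.comp (continuous_snd.smul
          (continuous_const.add (continuous_fst.smul continuous_const)))).mul
        continuous_const).mul
        (exp_continuous.comp ((continuous_const.sub continuous_snd).smul continuous_const))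
    exact this
  have hJ0 : J 0 = ∫ u in (0:ℝ)..1, exp (u • A) * B * exp ((1 - u) • A) := by
    simp [hJ]
  rw [← hJ0]; refine hasDerivAt_iff_tendsto_slope.2 ?_
  have hslope : ∀ s : ℝ, s ≠ 0 → slope (fun s : ℝ => exp (A + s • B)) 0 s = J s := by
    intro s hs
    have hd := duhamel A (A + s • B)
    have hsimp : (fun u : ℝ => exp (u • (A + s • B)) * (A + s • B - A) * exp ((1 - u) • A))
        = fun u : ℝ => s • (exp (u • (A + s • B)) * B * exp ((1 - u) • A)) := by
      funext u
      rw [add_sub_cancel_left, mul_smul_comm, smul_mul_assoc]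
    rw [hsimp, intervalIntegral.integral_smul] at hd
    rw [slope_def_module]
    simp only [zero_smul, add_zero]
    rw [hd, smul_smul, sub_zero, inv_mul_cancel₀ hs, one_smul]
  refine Filter.Tendsto.congr' ?_ ((hJcont.continuousAt).tendsto.mono_left nhdsWithin_le_nhds)
  filter_upwards [self_mem_nhdsWithin] with s hs
  exact (hslope s hs).symm

/-- The real-linear map `X ↦ Re Tr (X * M₀)`. -/
noncomputable def TrRe (M₀ : Mat) : Matrix (Fin n) (Fin n) ℂ →L[ℝ] ℝ :=
  LinearMap.toContinuousLinearMap
  { toFun := fun X => (Matrix.trace (X * M₀)).re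
    map_add' := fun X Y => by simp [add_mul, Matrix.trace_add]
    map_smul' := fun r X => by
      simp [Matrix.smul_mul, Matrix.trace_smul, Complex.smul_re] }

@[simp] lemma TrRe_apply (M₀ X : Mat) : TrRe M₀ X = (Matrix.trace (X * M₀)).re := rfl

lemma TrRe_hasDerivAt {f : ℝ → Matrix (Fin n) (Fin n) ℂ} {f' : Mat} {x : ℝ} (M₀ : Mat)
    (hf : HasDerivAt f f' x) :
    HasDerivAt (fun s => (Matrix.trace (f s * M₀)).re) (TrRe M₀ f') x := by
  exact (TrRe M₀).hasFDerivAt.comp_hasDerivAt x hf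

lemma TrRe_intervalIntegral (M₀ : Mat) {f : ℝ → Matrix (Fin n) (Fin n) ℂ}
    (hf : Continuous f) :
    (∫ u in (0:ℝ)..1, (Matrix.trace (f u * M₀)).re)
      = (Matrix.trace ((∫ u in (0:ℝ)..1, f u) * M₀)).re := by
  have := (TrRe M₀).intervalIntegral_comp_comm (a := 0) (b := 1)
    (hf.intervalIntegrable 0 1) (μ := volume)
  exact this

lemma comb_eq (x y : Mat) (s : ℝ) : (1 - s) • x + s • y = x + s • (y - x) := by module

lemma isSelfAdjoint_comb {ρ σ : Mat} (hρ : ρ.PosDef) (hσ : σ.PosDef) (s : ℝ) :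
    IsSelfAdjoint (mlog ρ + s • (mlog σ - mlog ρ)) :=
  (isSelfAdjoint_mlog ρ).add
    (IsSelfAdjoint.smul (star_trivial s) ((isSelfAdjoint_mlog σ).sub (isSelfAdjoint_mlog ρ)))

lemma alpha_eq {ρ σ : Mat} (s : ℝ) :
    alpha ρ σ s
      = Real.log (Matrix.trace (exp (mlog ρ + s • (mlog σ - mlog ρ)))).re := by
  rw [alpha, mexp_eq, comb_eq]

lemma arc_eq {ρ σ : Mat} (s : ℝ) :
    arc ρ σ s = Real.exp (-(alpha ρ σ s)) • exp (mlog ρ + s • (mlog σ - mlog ρ)) := by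
  rw [arc, mexp_eq, comb_eq, exp_sub_smul_one]

lemma mlog_arc {ρ σ : Mat} (hρ : ρ.PosDef) (hσ : σ.PosDef) (s : ℝ) :
    mlog (arc ρ σ s)
      = mlog ρ + s • (mlog σ - mlog ρ) - alpha ρ σ s • (1 : Mat) := by
  rw [arc, mexp_eq, comb_eq]
  exact mlog_exp _ ((isSelfAdjoint_comb hρ hσ s).sub
    (IsSelfAdjoint.smul (star_trivial _) (IsSelfAdjoint.one _)))

lemma exp_neg_alpha {ρ σ : Mat} (hn : 0 < n) (hρ : ρ.PosDef) (hσ : σ.PosDef) (s : ℝ) :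
    Real.exp (-(alpha ρ σ s))
      = ((Matrix.trace (exp (mlog ρ + s • (mlog σ - mlog ρ)))).re)⁻¹ := by
  rw [alpha_eq, Real.exp_neg, Real.exp_log (trace_exp_re_pos hn _ (isSelfAdjoint_comb hρ hσ s))]

lemma trace_arc {ρ σ : Mat} (hn : 0 < n) (hρ : ρ.PosDef) (hσ : σ.PosDef) (s : ℝ) :
    Matrix.trace (arc ρ σ s) = 1 := by
  rw [arc_eq, Matrix.trace_smul, exp_neg_alpha hn hρ hσ,
    trace_exp_real _ (isSelfAdjoint_comb hρ hσ s)]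
  rw [Complex.real_smul, Complex.ofReal_re, ← Complex.ofReal_mul,
    inv_mul_cancel₀ (trace_exp_re_pos hn _ (isSelfAdjoint_comb hρ hσ s)).ne']
  norm_num

lemma exp_smul_mul_exp_one_sub_smul (L : Mat) (u : ℝ) :
    exp ((1 - u) • L) * exp (u • L) = exp L := by
  rw [← Matrix.exp_add_of_commute _ _ (((Commute.refl L).smul_left (1 - u)).smul_right u)]
  congr 1
  module

lemma mpow_mul_mpow' {ρ : Mat} (hρ : ρ.PosDef) (u : ℝ) :
    mpow ρ (1 - u) * mpow ρ u = ρ := by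
  have := mpow_mul_mpow hρ (1 - u)
  rwa [sub_sub_cancel] at this

/-- the mixed second derivative `-(∂/∂s)(∂/∂t) D(σ_s‖τ_t)` at `s = t = 0`
exists and equals `∫₀¹ Tr(ρ^u c_ρ(σ) ρ^(1-u) c_ρ(τ)) du = Tr([c_ρ(σ)]^K_ρ · c_ρ(τ))`. -/
theorem stmt11 (n : ℕ) (hn : 1 ≤ n) (ρ σ τ : Matrix (Fin n) (Fin n) ℂ)
    (hρ : ρ.PosDef) (hρ1 : ρ.trace = 1) (hσ : σ.PosDef) (hσ1 : σ.trace = 1)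
    (hτ : τ.PosDef) (hτ1 : τ.trace = 1) :
    (∀ s : ℝ, DifferentiableAt ℝ (fun t => relEnt (arc ρ σ s) (arc ρ τ t)) 0) ∧
    HasDerivAt (fun s : ℝ => deriv (fun t => relEnt (arc ρ σ s) (arc ρ τ t)) 0)
      (-(∫ u in (0:ℝ)..1,
          (Matrix.trace (mpow ρ u * chart ρ σ * mpow ρ (1 - u) * chart ρ τ)).re)) 0 ∧
    (∫ u in (0:ℝ)..1,
        (Matrix.trace (mpow ρ u * chart ρ σ * mpow ρ (1 - u) * chart ρ τ)).re)
      = (Matrix.trace (kubo ρ (chart ρ σ) * chart ρ τ)).re := by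
  have hn' : 0 < n := hn
  set L := mlog ρ with hL
  set Bσ := mlog σ - mlog ρ with hBσ
  set Bτ := mlog τ - mlog ρ with hBτ
  set dσ := relEnt ρ σ with hdσ
  set dτ := relEnt ρ τ with hdτ
  have hexpL : NormedSpace.exp L = ρ := exp_mlog hρ
  have htrρBσ : (Matrix.trace (ρ * Bσ)).re = -dσ := by
    rw [hdσ, relEnt, hBσ, ← Complex.neg_re, ← Matrix.trace_neg, ← Matrix.mul_neg, neg_sub]
  have htrρBτ : (Matrix.trace (ρ * Bτ)).re = -dτ := by
    rw [hdτ, relEnt, hBτ, ← Complex.neg_re, ← Matrix.trace_neg, ← Matrix.mul_neg, neg_sub]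
  set Fσ : ℝ → Matrix (Fin n) (Fin n) ℂ := fun s => NormedSpace.exp (L + s • Bσ) with hFσ
  set Fτ : ℝ → Matrix (Fin n) (Fin n) ℂ := fun t => NormedSpace.exp (L + t • Bτ) with hFτ
  have hFσ0 : Fσ 0 = ρ := by rw [hFσ]; simp [hexpL]
  have hFτ0 : Fτ 0 = ρ := by rw [hFτ]; simp [hexpL]
  set rσ : ℝ → ℝ := fun s => (Matrix.trace (Fσ s)).re with hrσ
  set rτ : ℝ → ℝ := fun t => (Matrix.trace (Fτ t)).re with hrτ
  have hrσ0 : rσ 0 = 1 := by rw [hrσ]; simp only [hFσ0, hρ1]; rfl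
  have hrτ0 : rτ 0 = 1 := by rw [hrτ]; simp only [hFτ0, hρ1]; rfl
  set Kσ : Matrix (Fin n) (Fin n) ℂ :=
    ∫ u in (0:ℝ)..1, NormedSpace.exp (u • L) * Bσ * NormedSpace.exp ((1 - u) • L) with hKσ
  set Kτ : Matrix (Fin n) (Fin n) ℂ :=
    ∫ u in (0:ℝ)..1, NormedSpace.exp (u • L) * Bτ * NormedSpace.exp ((1 - u) • L) with hKτ
  have hFσD : HasDerivAt Fσ Kσ 0 := duhamel_hasDerivAt L Bσ
  have hFτD : HasDerivAt Fτ Kτ 0 := duhamel_hasDerivAt L Bτ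
  have hcontσ : Continuous fun u : ℝ =>
      NormedSpace.exp (u • L) * Bσ * NormedSpace.exp ((1 - u) • L) :=
    ((cont_exp_smul L).mul continuous_const).mul (cont_exp_one_sub_smul L)
  have hcontτ : Continuous fun u : ℝ =>
      NormedSpace.exp (u • L) * Bτ * NormedSpace.exp ((1 - u) • L) :=
    ((cont_exp_smul L).mul continuous_const).mul (cont_exp_one_sub_smul L)
  have hrσfun : rσ = fun s => (Matrix.trace (Fσ s * 1)).re := by
    funext s; rw [Matrix.mul_one]
  have hrτfun : rτ = fun t => (Matrix.trace (Fτ t * 1)).re := by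
    funext t; rw [Matrix.mul_one]
  have hrσD : HasDerivAt rσ (TrRe 1 Kσ) 0 := by rw [hrσfun]; exact TrRe_hasDerivAt 1 hFσD
  have hrτD : HasDerivAt rτ (TrRe 1 Kτ) 0 := by rw [hrτfun]; exact TrRe_hasDerivAt 1 hFτD
  -- the value of `TrRe 1 Kσ`
  have hkσ : TrRe 1 Kσ = -dσ := by
    rw [TrRe_apply, hKσ, ← TrRe_intervalIntegral 1 hcontσ]
    have hpt : ∀ u : ℝ, (Matrix.trace
        ((NormedSpace.exp (u • L) * Bσ * NormedSpace.exp ((1 - u) • L)) * 1)).re = -dσ := by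
      intro u
      rw [Matrix.mul_one, Matrix.trace_mul_comm, ← Matrix.mul_assoc,
        exp_smul_mul_exp_one_sub_smul, hexpL, htrρBσ]
    rw [intervalIntegral.integral_congr (g := fun _ => -dσ) (fun u _ => hpt u)]
    simp
  -- ψ and g
  set ψ : ℝ → ℝ := fun s => (Matrix.trace (Fσ s * Bτ)).re with hψdef
  have hψD : HasDerivAt ψ (TrRe Bτ Kσ) 0 := TrRe_hasDerivAt Bτ hFσD
  have hψ0 : ψ 0 = -dτ := by rw [hψdef]; simp only [hFσ0]; exact htrρBτ
  set g : ℝ → ℝ := fun s => Real.exp (-(alpha ρ σ s)) * ψ s with hgdef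
  have hgfun : g = fun s => ψ s / rσ s := by
    funext s
    show Real.exp (-(alpha ρ σ s)) * ψ s = ψ s / rσ s
    rw [exp_neg_alpha hn' hρ hσ s, ← hBσ, ← hL, inv_mul_eq_div]
  have hgD : HasDerivAt g ((TrRe Bτ Kσ * rσ 0 - ψ 0 * TrRe 1 Kσ) / (rσ 0) ^ 2) 0 := by
    rw [hgfun]
    exact hψD.div hrσD (by rw [hrσ0]; norm_num)
  have hgD' : HasDerivAt g (TrRe Bτ Kσ - dσ * dτ) 0 := by
    convert hgD using 1
    rw [hrσ0, hψ0, hkσ]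
    ring
  -- the t-derivative of alpha
  have halphaτfun : alpha ρ τ = fun t => Real.log (rτ t) := by
    funext t
    rw [alpha_eq, ← hBτ, ← hL]
  set aτ' : ℝ := (rτ 0)⁻¹ * TrRe 1 Kτ with haτ'
  have hαD : HasDerivAt (alpha ρ τ) aτ' 0 := by
    rw [halphaτfun, haτ']
    exact (Real.hasDerivAt_log (by rw [hrτ0]; norm_num)).comp 0 hrτD
  -- expansion of the relative entropy along the two arcs
  have hmlogdiff : ∀ s t : ℝ, mlog (arc ρ σ s) - mlog (arc ρ τ t)
      = s • Bσ - t • Bτ + (alpha ρ τ t - alpha ρ σ s) • (1 : Matrix (Fin n) (Fin n) ℂ) := by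
    intro s t
    rw [mlog_arc hρ hσ, mlog_arc hρ hτ, ← hBσ, ← hBτ, ← hL]
    module
  have harcσ : ∀ s : ℝ, arc ρ σ s = Real.exp (-(alpha ρ σ s)) • Fσ s := by
    intro s
    rw [arc_eq, ← hBσ, ← hL, hFσ]
  have hE : ∀ s t : ℝ, relEnt (arc ρ σ s) (arc ρ τ t)
      = (s * (Real.exp (-(alpha ρ σ s)) * (Matrix.trace (Fσ s * Bσ)).re) - alpha ρ σ s)
        + (alpha ρ τ t - t * g s) := by
    intro s t
    rw [relEnt, hmlogdiff s t]
    rw [Matrix.mul_add, Matrix.mul_sub, Matrix.mul_smul, Matrix.mul_smul, Matrix.mul_smul,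
      Matrix.mul_one, Matrix.trace_add, Matrix.trace_sub, Matrix.trace_smul, Matrix.trace_smul,
      Matrix.trace_smul, trace_arc hn' hρ hσ s]
    rw [harcσ s, Matrix.smul_mul, Matrix.smul_mul, Matrix.trace_smul, Matrix.trace_smul]
    simp only [Complex.add_re, Complex.sub_re, Complex.smul_re, Complex.one_re, hgdef, hψdef,
      smul_eq_mul]
    ring
  -- the t-derivative at 0
  have hDt : ∀ s : ℝ, HasDerivAt (fun t => relEnt (arc ρ σ s) (arc ρ τ t)) (aτ' - g s) 0 := by
    intro s
    have h1 : (fun t => relEnt (arc ρ σ s) (arc ρ τ t))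
        = fun t => (s * (Real.exp (-(alpha ρ σ s)) * (Matrix.trace (Fσ s * Bσ)).re)
            - alpha ρ σ s) + (alpha ρ τ t - t * g s) := funext fun t => hE s t
    rw [h1]
    exact (hαD.sub (hasDerivAt_mul_const (g s))).const_add _
  have hderivfun : (fun s : ℝ => deriv (fun t => relEnt (arc ρ σ s) (arc ρ τ t)) 0)
      = fun s => aτ' - g s := funext fun s => (hDt s).deriv
  -- the integrand identity
  have hchσ : chart ρ σ = Bσ + dσ • (1 : Matrix (Fin n) (Fin n) ℂ) := by rw [hBσ, hdσ]; rfl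
  have hchτ : chart ρ τ = Bτ + dτ • (1 : Matrix (Fin n) (Fin n) ℂ) := by rw [hBτ, hdτ]; rfl
  have hpt : ∀ u : ℝ, (Matrix.trace (mpow ρ u * chart ρ σ * mpow ρ (1 - u) * chart ρ τ)).re
      = (Matrix.trace ((NormedSpace.exp (u • L) * Bσ * NormedSpace.exp ((1 - u) • L))
          * Bτ)).re - dσ * dτ := by
    intro u
    have h1 : mpow ρ u * chart ρ σ = mpow ρ u * Bσ + dσ • mpow ρ u := by
      rw [hchσ, Matrix.mul_add, Matrix.mul_smul, Matrix.mul_one]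
    have h2 : mpow ρ u * chart ρ σ * mpow ρ (1 - u)
        = mpow ρ u * Bσ * mpow ρ (1 - u) + dσ • ρ := by
      rw [h1, Matrix.add_mul, Matrix.smul_mul, mpow_mul_mpow hρ]
    have h3 : mpow ρ u * chart ρ σ * mpow ρ (1 - u) * chart ρ τ
        = mpow ρ u * Bσ * mpow ρ (1 - u) * Bτ + dτ • (mpow ρ u * Bσ * mpow ρ (1 - u))
          + (dσ • (ρ * Bτ) + (dτ * dσ) • ρ) := by
      rw [h2, hchτ, Matrix.add_mul, Matrix.mul_add, Matrix.mul_add, Matrix.mul_smul,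
        Matrix.mul_one, Matrix.smul_mul, Matrix.mul_smul, Matrix.mul_one, smul_smul]
      try abel
    have hmid : (Matrix.trace (mpow ρ u * Bσ * mpow ρ (1 - u))).re = -dσ := by
      rw [Matrix.trace_mul_comm, ← Matrix.mul_assoc, mpow_mul_mpow' hρ, htrρBσ]
    have hmp : mpow ρ u * Bσ * mpow ρ (1 - u) * Bτ
        = NormedSpace.exp (u • L) * Bσ * NormedSpace.exp ((1 - u) • L) * Bτ := by
      rw [mpow_eq_exp hρ, mpow_eq_exp hρ, ← hL]
    rw [h3, hmp]
    simp only [Matrix.trace_add, Matrix.trace_smul, hρ1, Complex.add_re, Complex.smul_re,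
      Complex.one_re, hmid, htrρBτ, smul_eq_mul]
    ring
  -- the integral identity
  have hI : (∫ u in (0:ℝ)..1,
      (Matrix.trace (mpow ρ u * chart ρ σ * mpow ρ (1 - u) * chart ρ τ)).re)
      = TrRe Bτ Kσ - dσ * dτ := by
    rw [intervalIntegral.integral_congr (g := fun u =>
      (Matrix.trace ((NormedSpace.exp (u • L) * Bσ * NormedSpace.exp ((1 - u) • L))
        * Bτ)).re - dσ * dτ) (fun u _ => hpt u)]
    have hXc : Continuous fun u : ℝ => (Matrix.trace
        ((NormedSpace.exp (u • L) * Bσ * NormedSpace.exp ((1 - u) • L)) * Bτ)).re :=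
      (TrRe Bτ).continuous.comp hcontσ
    rw [intervalIntegral.integral_sub (hXc.intervalIntegrable 0 1) intervalIntegrable_const]
    rw [TrRe_intervalIntegral Bτ hcontσ, ← hKσ]
    simp [TrRe_apply]
  refine ⟨fun s => (hDt s).differentiableAt, ?_, ?_⟩
  · rw [hderivfun, hI]
    exact hgD'.const_sub aτ'
  · -- part 3
    have hptf : (fun u : ℝ => mpow ρ u * chart ρ σ * mpow ρ (1 - u))
        = fun u : ℝ => NormedSpace.exp (u • L) * chart ρ σ * NormedSpace.exp ((1 - u) • L) :=
      funext fun u => by rw [mpow_eq_exp hρ, mpow_eq_exp hρ, ← hL]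
    have hcontf : Continuous fun u : ℝ => mpow ρ u * chart ρ σ * mpow ρ (1 - u) := by
      rw [hptf]
      exact ((cont_exp_smul L).mul continuous_const).mul (cont_exp_one_sub_smul L)
    exact TrRe_intervalIntegral (chart ρ τ) hcontf

end Aux
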